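/- Let f(X) > 0 be a weight function, τ(X) a fixed measurable function, and suppose ρ(Z) and φ(Z) are random variables satisfying (i) E[ρ(Z) | X] = f(X), and (ii) E[ρ(Z)·(φ(Z) − τ(X))·g(X)] = 0 for all g in a class 𝒢 closed under the relevant operations. Then the weighted orthogonal loss L(g) = E[ρ(Z)(φ(Z) − g(X))²] decomposes as L(g) = E[ρ(Z)(φ(Z) − τ(X))²] + 2E[ρ(Z)(φ(Z) − τ(X))τ(X)] + E[f(X)(τ(X) − g(X))²], so its minimizer over 𝒢 coincides with the minimizer of the weighted oracle loss E[f(X)(τ(X) − g(X))²]. -/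
import Mathlib


open Finset
open scoped Classical

/-- Probability of an event under weights `w` on a finite sample space. -/
noncomputable def Pr {Ω : Type*} [Fintype Ω] (w : Ω → ℝ) (E : Ω → Prop) : ℝ :=
  ∑ ω : Ω, if E ω then w ω else 0

/-- If `E[ρ | X] = f(X)` and `E[ρ(φ − τ(X)) g(X)] = 0` for all `g ∈ 𝒢`, then the
weighted orthogonal loss decomposes as
`E[ρ(φ − g(X))²] = E[ρ(φ − τ(X))²] + 2E[ρ(φ − τ(X))τ(X)] + E[f(X)(τ(X) − g(X))²]`,
so a `g* ∈ 𝒢` minimizes it over `𝒢` iff it minimizes the weighted oracle loss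
`E[f(X)(τ(X) − g(X))²]`. -/
theorem orthogonal_loss_decomposition
    {Ω 𝒳 : Type*} [Fintype Ω] [Fintype 𝒳]
    (w : Ω → ℝ) (hw : ∀ ω, 0 ≤ w ω) (hsum : ∑ ω : Ω, w ω = 1)
    (X : Ω → 𝒳)
    (f : 𝒳 → ℝ) (hf : ∀ x, 0 < f x)
    (τ : 𝒳 → ℝ) (ρ φ : Ω → ℝ)
    (𝒢 : Set (𝒳 → ℝ))
    -- (i) E[ρ | X] = f(X) almost surely
    (hcond : ∀ x : 𝒳, (∑ ω : Ω, if X ω = x then w ω * ρ ω else 0)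
        = f x * Pr w (fun ω => X ω = x))
    -- (ii) E[ρ(φ − τ(X)) g(X)] = 0 for all g ∈ 𝒢
    (horth : ∀ g ∈ 𝒢,
      (∑ ω : Ω, w ω * (ρ ω * (φ ω - τ (X ω)) * g (X ω))) = 0) :
    (∀ g ∈ 𝒢,
      (∑ ω : Ω, w ω * (ρ ω * (φ ω - g (X ω)) ^ 2))
        = (∑ ω : Ω, w ω * (ρ ω * (φ ω - τ (X ω)) ^ 2))
          + 2 * (∑ ω : Ω, w ω * (ρ ω * (φ ω - τ (X ω)) * τ (X ω)))
          + (∑ ω : Ω, w ω * (f (X ω) * (τ (X ω) - g (X ω)) ^ 2)))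
    ∧ ∀ gstar ∈ 𝒢,
      ((∀ g ∈ 𝒢, (∑ ω : Ω, w ω * (ρ ω * (φ ω - gstar (X ω)) ^ 2))
            ≤ (∑ ω : Ω, w ω * (ρ ω * (φ ω - g (X ω)) ^ 2)))
        ↔ (∀ g ∈ 𝒢, (∑ ω : Ω, w ω * (f (X ω) * (τ (X ω) - gstar (X ω)) ^ 2))
            ≤ (∑ ω : Ω, w ω * (f (X ω) * (τ (X ω) - g (X ω)) ^ 2)))) := by
  -- Key: E[ρ · h(X)] = E[f(X) · h(X)] for any h
  have key : ∀ h : 𝒳 → ℝ,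
      (∑ ω : Ω, w ω * (ρ ω * h (X ω))) = ∑ ω : Ω, w ω * (f (X ω) * h (X ω)) := by
    intro h
    have l1 : (∑ ω : Ω, w ω * (ρ ω * h (X ω)))
        = ∑ x : 𝒳, (∑ ω : Ω, if X ω = x then w ω * ρ ω else 0) * h x := by
      simp only [Finset.sum_mul]
      rw [Finset.sum_comm]
      refine Finset.sum_congr rfl fun ω _ => ?_
      simp only [Finset.sum_mul, ite_mul, zero_mul]
      rw [Finset.sum_ite_eq Finset.univ (X ω) (fun x => w ω * ρ ω * h x)]
      simp [mul_assoc]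
    have l2 : (∑ ω : Ω, w ω * (f (X ω) * h (X ω)))
        = ∑ x : 𝒳, (f x * Pr w (fun ω => X ω = x)) * h x := by
      simp only [Pr, Finset.mul_sum, Finset.sum_mul]
      rw [Finset.sum_comm]
      refine Finset.sum_congr rfl fun ω _ => ?_
      simp only [Pr, Finset.sum_mul, mul_ite, ite_mul, mul_zero, zero_mul]
      rw [Finset.sum_ite_eq Finset.univ (X ω) (fun x => f x * w ω * h x)]
      simp; ring
    rw [l1, l2]
    exact Finset.sum_congr rfl fun x _ => by rw [hcond x]
  have decomp : ∀ g ∈ 𝒢,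
      (∑ ω : Ω, w ω * (ρ ω * (φ ω - g (X ω)) ^ 2))
        = (∑ ω : Ω, w ω * (ρ ω * (φ ω - τ (X ω)) ^ 2))
          + 2 * (∑ ω : Ω, w ω * (ρ ω * (φ ω - τ (X ω)) * τ (X ω)))
          + (∑ ω : Ω, w ω * (f (X ω) * (τ (X ω) - g (X ω)) ^ 2)) := by
    intro g hg
    have e1 : (∑ ω : Ω, w ω * (ρ ω * (φ ω - g (X ω)) ^ 2))
        = ∑ ω : Ω, (w ω * (ρ ω * (φ ω - τ (X ω)) ^ 2)
            + 2 * (w ω * (ρ ω * (φ ω - τ (X ω)) * τ (X ω)))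
            - 2 * (w ω * (ρ ω * (φ ω - τ (X ω)) * g (X ω)))
            + w ω * (ρ ω * (τ (X ω) - g (X ω)) ^ 2)) :=
      Finset.sum_congr rfl fun ω _ => by ring
    rw [e1]
    simp only [Finset.sum_add_distrib, Finset.sum_sub_distrib, ← Finset.mul_sum]
    rw [horth g hg, key (fun x => (τ x - g x) ^ 2)]
    ring
  refine ⟨decomp, fun gstar hgstar => ?_⟩
  constructor
  · intro h g hg
    have h1 := h g hg
    rw [decomp gstar hgstar, decomp g hg] at h1
    linarith
  · intro h g hg
    have h1 := h g hg
    rw [decomp gstar hgstar, decomp g hg]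
    linarith
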